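/- For arbitrary u, v ∈ Dom(L) the limits [u,v](−∞) := lim_{t→−∞}[u,v](t) and [u,v](∞) := lim_{t→∞}[u,v](t) exist and are finite. -/

import Mathlib

open MeasureTheory Complex Filter Set

noncomputable section

/-- The complex Hilbert space `L²(ℝ)`. -/
abbrev Hsp : Type := Lp ℂ 2 (volume : Measure ℝ)

/-- `u` is locally absolutely continuous on `ℝ` with a.e. derivative `g`
(i.e. `u` is the indefinite integral of the locally integrable function `g`). -/
def HasLocDeriv (u g : ℝ → ℂ) : Prop :=
  LocallyIntegrable g volume ∧ ∀ x : ℝ, u x = u 0 + ∫ t in (0:ℝ)..x, g t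

lemma HasLocDeriv.intervalIntegrable {u g : ℝ → ℂ} (h : HasLocDeriv u g) (a b : ℝ) :
    IntervalIntegrable g volume a b :=
  (h.1.integrableOn_isCompact isCompact_uIcc).intervalIntegrable

lemma HasLocDeriv.congr_fun {u v g : ℝ → ℂ} (h : HasLocDeriv u g) (huv : ∀ x, v x = u x) :
    HasLocDeriv v g :=
  ⟨h.1, fun x => by rw [huv x, huv 0]; exact h.2 x⟩

lemma HasLocDeriv.zero : HasLocDeriv (0 : ℝ → ℂ) 0 := by
  refine ⟨locallyIntegrable_const (0 : ℂ), fun x => by simp⟩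

lemma HasLocDeriv.add {u g v h' : ℝ → ℂ} (hu : HasLocDeriv u g) (hv : HasLocDeriv v h') :
    HasLocDeriv (fun x => u x + v x) (fun x => g x + h' x) := by
  refine ⟨hu.1.add hv.1, fun x => ?_⟩
  show u x + v x = u 0 + v 0 + ∫ t in (0:ℝ)..x, (g t + h' t)
  rw [intervalIntegral.integral_add (hu.intervalIntegrable 0 x) (hv.intervalIntegrable 0 x),
    hu.2 x, hv.2 x]
  ring

lemma HasLocDeriv.const_mul {u g : ℝ → ℂ} (c : ℂ) (hu : HasLocDeriv u g) :
    HasLocDeriv (fun x => c * u x) (fun x => c * g x) := by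
  have hli : LocallyIntegrable (fun x => c * g x) volume := hu.1.smul c
  refine ⟨hli, fun x => ?_⟩
  have h : ∫ t in (0:ℝ)..x, c * g t = c * ∫ t in (0:ℝ)..x, g t := by
    simpa [smul_eq_mul] using intervalIntegral.integral_smul c g (a := (0:ℝ)) (b := x) (μ := volume)
  show c * u x = c * u 0 + ∫ t in (0:ℝ)..x, c * g t
  rw [h, hu.2 x]
  ring

/-- The first quasi-derivative `u^{[1]} = p u' - (Q + i r) u`. -/
def qd1 (p Q r : ℝ → ℝ) (u u' : ℝ → ℂ) : ℝ → ℂ :=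
  fun x => (p x : ℂ) * u' x - ((Q x : ℂ) + Complex.I * (r x : ℂ)) * u x

/-- `u` belongs (locally) to the domain of the quasi-differential expression:
`u` is locally absolutely continuous with derivative `u'` and the first quasi-derivative
`u^{[1]} = p u' - (Q + i r) u` is locally absolutely continuous with derivative `w`. -/
def QDom (p Q s r : ℝ → ℝ) (u u' w : ℝ → ℂ) : Prop :=
  HasLocDeriv u u' ∧ HasLocDeriv (qd1 p Q r u u') w

/-- The quasi-differential expression `l[u] = -u^{[2]}` where
`u^{[2]} = (u^{[1]})' + ((Q - i r)/p) u^{[1]} + ((Q² + r²)/p - s) u`. -/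
def lExpr (p Q s r : ℝ → ℝ) (u u' w : ℝ → ℂ) : ℝ → ℂ := fun x =>
  -(w x + (((Q x : ℂ) - Complex.I * (r x : ℂ)) / (p x : ℂ)) * qd1 p Q r u u' x
    + ((((Q x) ^ 2 + (r x) ^ 2 : ℝ) : ℂ) / (p x : ℂ) - (s x : ℂ)) * u x)

/-- The standing minimal regularity assumptions on the real-valued coefficients:
`1/√|p|, Q/√|p|, r/√|p| ∈ L²_loc(ℝ)`, `s ∈ L¹_loc(ℝ)` and `1/p ≠ 0` a.e. -/
structure Coeffs (p Q s r : ℝ → ℝ) : Prop where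
  meas_p : Measurable p
  meas_Q : Measurable Q
  meas_s : Measurable s
  meas_r : Measurable r
  hp : LocallyIntegrable (fun x => 1 / |p x|) volume
  hQ : LocallyIntegrable (fun x => (Q x) ^ 2 / |p x|) volume
  hr : LocallyIntegrable (fun x => (r x) ^ 2 / |p x|) volume
  hs : LocallyIntegrable s volume
  hp0 : ∀ᵐ x ∂(volume : Measure ℝ), p x ≠ 0

lemma qd1_add_eq (p Q r : ℝ → ℝ) (u₁ u₁' u₂ u₂' : ℝ → ℂ) (x : ℝ) :
    qd1 p Q r (fun y => u₁ y + u₂ y) (fun y => u₁' y + u₂' y) x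
      = qd1 p Q r u₁ u₁' x + qd1 p Q r u₂ u₂' x := by
  simp only [qd1]; ring

lemma qd1_smul_eq (p Q r : ℝ → ℝ) (c : ℂ) (u u' : ℝ → ℂ) (x : ℝ) :
    qd1 p Q r (fun y => c * u y) (fun y => c * u' y) x = c * qd1 p Q r u u' x := by
  simp only [qd1]; ring

lemma QDom.zero (p Q s r : ℝ → ℝ) : QDom p Q s r 0 0 0 := by
  refine ⟨HasLocDeriv.zero, HasLocDeriv.zero.congr_fun fun x => ?_⟩
  simp [qd1]

lemma QDom.add {p Q s r : ℝ → ℝ} {u₁ u₁' w₁ u₂ u₂' w₂ : ℝ → ℂ}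
    (h₁ : QDom p Q s r u₁ u₁' w₁) (h₂ : QDom p Q s r u₂ u₂' w₂) :
    QDom p Q s r (fun x => u₁ x + u₂ x) (fun x => u₁' x + u₂' x) (fun x => w₁ x + w₂ x) :=
  ⟨h₁.1.add h₂.1, (h₁.2.add h₂.2).congr_fun (qd1_add_eq p Q r u₁ u₁' u₂ u₂')⟩

lemma QDom.smul {p Q s r : ℝ → ℝ} {u u' w : ℝ → ℂ} (c : ℂ) (h : QDom p Q s r u u' w) :
    QDom p Q s r (fun x => c * u x) (fun x => c * u' x) (fun x => c * w x) :=
  ⟨h.1.const_mul c, (h.2.const_mul c).congr_fun (qd1_smul_eq p Q r c u u')⟩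

lemma lExpr_zero (p Q s r : ℝ → ℝ) (x : ℝ) : lExpr p Q s r 0 0 0 x = 0 := by
  simp [lExpr, qd1]

lemma lExpr_add (p Q s r : ℝ → ℝ) (u₁ u₁' w₁ u₂ u₂' w₂ : ℝ → ℂ) (x : ℝ) :
    lExpr p Q s r (fun y => u₁ y + u₂ y) (fun y => u₁' y + u₂' y) (fun y => w₁ y + w₂ y) x
      = lExpr p Q s r u₁ u₁' w₁ x + lExpr p Q s r u₂ u₂' w₂ x := by
  simp only [lExpr, qd1]; ring

lemma lExpr_smul (p Q s r : ℝ → ℝ) (c : ℂ) (u u' w : ℝ → ℂ) (x : ℝ) :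
    lExpr p Q s r (fun y => c * u y) (fun y => c * u' y) (fun y => c * w y) x
      = c * lExpr p Q s r u u' w x := by
  simp only [lExpr, qd1]; ring

/-- The graph of the maximal operator `L` in `L²(ℝ) × L²(ℝ)`. -/
def maxGraph (p Q s r : ℝ → ℝ) : Submodule ℂ (Hsp × Hsp) where
  carrier := {fg | ∃ u u' w, QDom p Q s r u u' w ∧ (⇑fg.1 =ᵐ[volume] u) ∧
    (⇑fg.2 =ᵐ[volume] lExpr p Q s r u u' w)}
  zero_mem' := by
    refine ⟨0, 0, 0, QDom.zero p Q s r, ?_, ?_⟩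
    · filter_upwards [Lp.coeFn_zero ℂ 2 (volume : Measure ℝ)] with x hx using hx
    · filter_upwards [Lp.coeFn_zero ℂ 2 (volume : Measure ℝ)] with x hx
      rw [lExpr_zero]; exact hx
  add_mem' := by
    rintro ⟨f₁, g₁⟩ ⟨f₂, g₂⟩ ⟨u₁, u₁', w₁, hq₁, hf₁, hg₁⟩ ⟨u₂, u₂', w₂, hq₂, hf₂, hg₂⟩
    refine ⟨fun x => u₁ x + u₂ x, fun x => u₁' x + u₂' x, fun x => w₁ x + w₂ x,
      hq₁.add hq₂, ?_, ?_⟩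
    · filter_upwards [Lp.coeFn_add f₁ f₂, hf₁, hf₂] with x h1 h2 h3
      show (⇑(f₁ + f₂)) x = _
      rw [h1]; simp [h2, h3]
    · filter_upwards [Lp.coeFn_add g₁ g₂, hg₁, hg₂] with x h1 h2 h3
      show (⇑(g₁ + g₂)) x = _
      rw [h1, lExpr_add]; simp [h2, h3]
  smul_mem' := by
    rintro c ⟨f, g⟩ ⟨u, u', w, hq, hf, hg⟩
    refine ⟨fun x => c * u x, fun x => c * u' x, fun x => c * w x, hq.smul c, ?_, ?_⟩
    · filter_upwards [Lp.coeFn_smul c f, hf] with x h1 h2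
      show (⇑(c • f)) x = _
      rw [h1]; simp [h2]
    · filter_upwards [Lp.coeFn_smul c g, hg] with x h1 h2
      show (⇑(c • g)) x = _
      rw [h1, lExpr_smul]; simp [h2]

/-- The graph of the preminimal operator `L₀₀` (compactly supported members of the graph
of the maximal operator). -/
def preminGraph (p Q s r : ℝ → ℝ) : Submodule ℂ (Hsp × Hsp) where
  carrier := {fg | ∃ u u' w, QDom p Q s r u u' w ∧ HasCompactSupport u ∧
    (⇑fg.1 =ᵐ[volume] u) ∧ (⇑fg.2 =ᵐ[volume] lExpr p Q s r u u' w)}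
  zero_mem' := by
    refine ⟨0, 0, 0, QDom.zero p Q s r, by simpa using HasCompactSupport.zero, ?_, ?_⟩
    · filter_upwards [Lp.coeFn_zero ℂ 2 (volume : Measure ℝ)] with x hx using hx
    · filter_upwards [Lp.coeFn_zero ℂ 2 (volume : Measure ℝ)] with x hx
      rw [lExpr_zero]; exact hx
  add_mem' := by
    rintro ⟨f₁, g₁⟩ ⟨f₂, g₂⟩ ⟨u₁, u₁', w₁, hq₁, hc₁, hf₁, hg₁⟩ ⟨u₂, u₂', w₂, hq₂, hc₂, hf₂, hg₂⟩
    refine ⟨fun x => u₁ x + u₂ x, fun x => u₁' x + u₂' x, fun x => w₁ x + w₂ x,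
      hq₁.add hq₂, hc₁.add hc₂, ?_, ?_⟩
    · filter_upwards [Lp.coeFn_add f₁ f₂, hf₁, hf₂] with x h1 h2 h3
      show (⇑(f₁ + f₂)) x = _
      rw [h1]; simp [h2, h3]
    · filter_upwards [Lp.coeFn_add g₁ g₂, hg₁, hg₂] with x h1 h2 h3
      show (⇑(g₁ + g₂)) x = _
      rw [h1, lExpr_add]; simp [h2, h3]
  smul_mem' := by
    rintro c ⟨f, g⟩ ⟨u, u', w, hq, hc, hf, hg⟩
    refine ⟨fun x => c * u x, fun x => c * u' x, fun x => c * w x, hq.smul c,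
      hc.mono ?_, ?_, ?_⟩
    · intro x hx
      simp only [Function.mem_support, ne_eq] at hx ⊢
      exact fun h => hx (by rw [h, mul_zero])
    · filter_upwards [Lp.coeFn_smul c f, hf] with x h1 h2
      show (⇑(c • f)) x = _
      rw [h1]; simp [h2]
    · filter_upwards [Lp.coeFn_smul c g, hg] with x h1 h2
      show (⇑(c • g)) x = _
      rw [h1, lExpr_smul]; simp [h2]

/-- The maximal operator `L`, an unbounded operator in `L²(ℝ)`. -/
def maxOp (p Q s r : ℝ → ℝ) : Hsp →ₗ.[ℂ] Hsp := (maxGraph p Q s r).toLinearPMap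

/-- The preminimal operator `L₀₀`, the restriction of `L` to compactly supported functions. -/
def preminOp (p Q s r : ℝ → ℝ) : Hsp →ₗ.[ℂ] Hsp := (preminGraph p Q s r).toLinearPMap

/-- The minimal operator `L₀`, the closure of `L₀₀`. -/
def minOp (p Q s r : ℝ → ℝ) : Hsp →ₗ.[ℂ] Hsp := (preminOp p Q s r).closure

/-- The boundary bilinear form `[u,v](t) = u(t)·conj(v^{[1]}(t)) − u^{[1]}(t)·conj(v(t))`. -/
def brkt (p Q r : ℝ → ℝ) (u u' v v' : ℝ → ℂ) (t : ℝ) : ℂ :=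
  u t * (starRingEnd ℂ) (qd1 p Q r v v' t) - qd1 p Q r u u' t * (starRingEnd ℂ) (v t)

/-- `u, u', w` is a concrete representative of `f` as a member of `Dom(L)`:
`u` is a representative of the `L²`-class `f`, `u` and `u^{[1]}` are locally absolutely
continuous (with derivatives `u'` and `w` respectively) and `l[u] ∈ L²(ℝ)`. -/
def IsMaxRep (p Q s r : ℝ → ℝ) (f : Hsp) (u u' w : ℝ → ℂ) : Prop :=
  QDom p Q s r u u' w ∧ (⇑f =ᵐ[volume] u) ∧ MemLp (lExpr p Q s r u u' w) 2 volume

/-- Function-level membership in the domain of the preminimal operator `L₀₀`: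
`v` and `v^{[1]}` are locally absolutely continuous, `v, l[v] ∈ L²(ℝ)` and `v` has
compact support. -/
def MemPremin (p Q s r : ℝ → ℝ) (v : ℝ → ℂ) : Prop :=
  ∃ v' w : ℝ → ℂ, QDom p Q s r v v' w ∧ MemLp v 2 volume ∧
    MemLp (lExpr p Q s r v v' w) 2 volume ∧ HasCompactSupport v

/-- `p ∈ W¹_{2,loc}(ℝ)` (for a real-valued function), with weak derivative `p' ∈ L²_loc`. -/
def W12locR (p p' : ℝ → ℝ) : Prop :=
  LocallyIntegrable p' volume ∧ LocallyIntegrable (fun x => (p' x) ^ 2) volume ∧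
  ∀ x : ℝ, p x = p 0 + ∫ t in (0:ℝ)..x, p' t

/-- `φ ∈ W²₂(ℝ)` with compact support: `φ, φ', φ'' ∈ L²(ℝ)` where `φ'` and `φ''` are the
first and second weak derivatives of `φ`, and `supp φ` is compact. -/
def W22cs (φ φ' φ'' : ℝ → ℝ) : Prop :=
  LocallyIntegrable φ' volume ∧ LocallyIntegrable φ'' volume ∧
  MemLp φ 2 volume ∧ MemLp φ' 2 volume ∧ MemLp φ'' 2 volume ∧
  (∀ x : ℝ, φ x = φ 0 + ∫ t in (0:ℝ)..x, φ' t) ∧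
  (∀ x : ℝ, φ' x = φ' 0 + ∫ t in (0:ℝ)..x, φ'' t) ∧
  HasCompactSupport φ

/-- `p ∈ W¹₂([α,β]) = H¹([α,β])` with weak derivative `p'` on the interval `[α,β]`. -/
def W12OnIcc (p p' : ℝ → ℝ) (α β : ℝ) : Prop :=
  IntegrableOn p' (Set.Icc α β) volume ∧ MemLp p' 2 (volume.restrict (Set.Icc α β)) ∧
  ∀ x ∈ Set.Icc α β, p x = p α + ∫ t in α..x, p' t

/-! ### Auxiliary lemmas for Statement 8 -/

section BrktAux

open intervalIntegral

lemma HasLocDeriv.continuous' {u g : ℝ → ℂ} (h : HasLocDeriv u g) : Continuous u := by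
  have hc : Continuous fun x => u 0 + ∫ t in (0:ℝ)..x, g t :=
    continuous_const.add
      (intervalIntegral.continuous_primitive (fun a b => h.intervalIntegrable a b) 0)
  exact hc.congr fun x => (h.2 x).symm

lemma locallyIntegrable_of_forall {f : ℝ → ℂ}
    (h : ∀ a b : ℝ, IntervalIntegrable f volume a b) : LocallyIntegrable f volume := by
  intro x
  exact ⟨Ioc (x-1) (x+1), Ioc_mem_nhds (by linarith) (by linarith), (h (x-1) (x+1)).1⟩

lemma integrable_conj' {μ : Measure ℝ} {f : ℝ → ℂ} (h : Integrable f μ) :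
    Integrable (fun x => (starRingEnd ℂ) (f x)) μ := by
  refine h.norm.mono' (continuous_star.comp_aestronglyMeasurable h.1) ?_
  exact Eventually.of_forall fun x => by simp [RCLike.norm_conj]

lemma HasLocDeriv.eq_add_integral {u g : ℝ → ℂ} (h : HasLocDeriv u g) (a x : ℝ) :
    u x = u a + ∫ t in a..x, g t := by
  rw [h.2 x, h.2 a,
    ← intervalIntegral.integral_add_adjacent_intervals (h.intervalIntegrable 0 a)
      (h.intervalIntegrable a x)]
  ring

lemma HasLocDeriv.conj' {u g : ℝ → ℂ} (h : HasLocDeriv u g) :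
    HasLocDeriv (fun x => (starRingEnd ℂ) (u x)) (fun x => (starRingEnd ℂ) (g x)) := by
  constructor
  · exact locallyIntegrable_of_forall fun a b =>
      ⟨integrable_conj' (h.intervalIntegrable a b).1,
       integrable_conj' (h.intervalIntegrable a b).2⟩
  · intro x
    have hci : ∫ t in (0:ℝ)..x, (starRingEnd ℂ) (g t)
        = (starRingEnd ℂ) (∫ t in (0:ℝ)..x, g t) := by
      rw [intervalIntegral, intervalIntegral, integral_conj, integral_conj, ← map_sub]
    show (starRingEnd ℂ) (u x) = (starRingEnd ℂ) (u 0) + ∫ t in (0:ℝ)..x, (starRingEnd ℂ) (g t)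
    rw [h.2 x, map_add, hci]

lemma HasLocDeriv.sub' {u g v h : ℝ → ℂ} (hu : HasLocDeriv u g) (hv : HasLocDeriv v h) :
    HasLocDeriv (fun x => u x - v x) (fun x => g x - h x) := by
  have h1 := hu.add (hv.const_mul (-1))
  have e1 : (fun x => u x + (-1) * v x) = fun x => u x - v x := by funext x; ring
  have e2 : (fun x => g x + (-1) * h x) = fun x => g x - h x := by funext x; ring
  rw [e1, e2] at h1
  exact h1

lemma fubini_swap {g h : ℝ → ℂ} (hg : LocallyIntegrable g volume)
    (hh : LocallyIntegrable h volume) {a b : ℝ} (hab : a ≤ b) :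
    ∫ t in a..b, g t * (∫ τ in a..t, h τ) = ∫ τ in a..b, (∫ t in τ..b, g t) * h τ := by
  set μ : Measure ℝ := volume.restrict (Ioc a b) with hμ
  have hgI : Integrable g μ :=
    (hg.integrableOn_isCompact isCompact_Icc).mono_set Ioc_subset_Icc_self
  have hhI : Integrable h μ :=
    (hh.integrableOn_isCompact isCompact_Icc).mono_set Ioc_subset_Icc_self
  set F : ℝ × ℝ → ℂ :=
    fun z => Set.indicator {z : ℝ × ℝ | z.2 ≤ z.1} (fun z => g z.1 * h z.2) z with hF
  have hFm : MeasurableSet {z : ℝ × ℝ | z.2 ≤ z.1} :=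
    measurableSet_le measurable_snd measurable_fst
  have hFi : Integrable F (μ.prod μ) := (hgI.mul_prod hhI).indicator hFm
  have hswap : (∫ t, (∫ τ, F (t, τ) ∂μ) ∂μ) = ∫ τ, (∫ t, F (t, τ) ∂μ) ∂μ :=
    MeasureTheory.integral_integral_swap (f := fun t τ => F (t, τ)) (by exact hFi)
  have inner1 : ∀ t ∈ Ioc a b, (∫ τ, F (t, τ) ∂μ) = g t * ∫ τ in a..t, h τ := by
    intro t ht
    have e1 : (fun τ => F (t, τ)) = Set.indicator (Iic t) (fun τ => g t * h τ) := by
      funext τ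
      simp only [hF, Set.indicator_apply, Set.mem_setOf_eq, Set.mem_Iic]
    rw [e1, MeasureTheory.integral_indicator measurableSet_Iic, hμ,
      Measure.restrict_restrict measurableSet_Iic]
    have e2 : Iic t ∩ Ioc a b = Ioc a t := by
      ext y
      simp only [Set.mem_inter_iff, Set.mem_Iic, Set.mem_Ioc]
      exact ⟨fun ⟨h1, h2, _⟩ => ⟨h2, h1⟩, fun ⟨h1, h2⟩ => ⟨h2, h1, h2.trans ht.2⟩⟩
    rw [e2, intervalIntegral.integral_of_le ht.1.le, MeasureTheory.integral_const_mul]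
  have inner2 : ∀ τ ∈ Ioc a b, (∫ t, F (t, τ) ∂μ) = (∫ t in τ..b, g t) * h τ := by
    intro τ hτ
    have e1 : (fun t => F (t, τ)) = Set.indicator (Ici τ) (fun t => g t * h τ) := by
      funext t
      simp only [hF, Set.indicator_apply, Set.mem_setOf_eq, Set.mem_Ici]
    rw [e1, MeasureTheory.integral_indicator measurableSet_Ici, hμ,
      Measure.restrict_restrict measurableSet_Ici]
    have e2 : Ici τ ∩ Ioc a b = Icc τ b := by
      ext y
      simp only [Set.mem_inter_iff, Set.mem_Ici, Set.mem_Ioc, Set.mem_Icc]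
      exact ⟨fun ⟨h1, _, h3⟩ => ⟨h1, h3⟩, fun ⟨h1, h2⟩ => ⟨h1, lt_of_lt_of_le hτ.1 h1, h2⟩⟩
    rw [e2, MeasureTheory.integral_Icc_eq_integral_Ioc,
      intervalIntegral.integral_of_le hτ.2, MeasureTheory.integral_mul_const]
  calc ∫ t in a..b, g t * (∫ τ in a..t, h τ)
      = ∫ t, (∫ τ, F (t, τ) ∂μ) ∂μ := by
        rw [intervalIntegral.integral_of_le hab]
        exact (setIntegral_congr_fun measurableSet_Ioc fun t ht => inner1 t ht).symm
    _ = ∫ τ, (∫ t, F (t, τ) ∂μ) ∂μ := hswap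
    _ = ∫ τ in a..b, (∫ t in τ..b, g t) * h τ := by
        rw [intervalIntegral.integral_of_le hab]
        exact setIntegral_congr_fun measurableSet_Ioc fun τ hτ => inner2 τ hτ

lemma HasLocDeriv.mul' {u g v h : ℝ → ℂ} (hu : HasLocDeriv u g) (hv : HasLocDeriv v h) :
    HasLocDeriv (fun x => u x * v x) (fun x => g x * v x + u x * h x) := by
  have hvc : Continuous v := hv.continuous'
  have huc : Continuous u := hu.continuous'
  have hint : ∀ a b : ℝ, IntervalIntegrable (fun x => g x * v x + u x * h x) volume a b :=
    fun a b =>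
      ((hu.intervalIntegrable a b).mul_continuousOn hvc.continuousOn).add
        ((hv.intervalIntegrable a b).continuousOn_mul huc.continuousOn)
  refine ⟨locallyIntegrable_of_forall hint, ?_⟩
  have key : ∀ a b : ℝ, a ≤ b →
      u b * v b - u a * v a = ∫ t in a..b, (g t * v t + u t * h t) := by
    intro a b hab
    have hGc : Continuous fun t => ∫ τ in a..t, g τ :=
      intervalIntegral.continuous_primitive (fun c d => hu.intervalIntegrable c d) a
    have hHc : Continuous fun t => ∫ τ in a..t, h τ :=
      intervalIntegral.continuous_primitive (fun c d => hv.intervalIntegrable c d) a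
    have i_g : IntervalIntegrable g volume a b := hu.intervalIntegrable a b
    have i_h : IntervalIntegrable h volume a b := hv.intervalIntegrable a b
    have i_gH : IntervalIntegrable (fun t => g t * ∫ τ in a..t, h τ) volume a b :=
      i_g.mul_continuousOn hHc.continuousOn
    have i_Gh : IntervalIntegrable (fun t => (∫ τ in a..t, g τ) * h t) volume a b :=
      i_h.continuousOn_mul hGc.continuousOn
    have e1 : (∫ t in a..b, (g t * v t + u t * h t))
        = ∫ t in a..b, (g t * v a + g t * (∫ τ in a..t, h τ)
            + (u a * h t + (∫ τ in a..t, g τ) * h t)) := by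
      apply intervalIntegral.integral_congr
      intro t _
      show g t * v t + u t * h t = _
      rw [hu.eq_add_integral a t, hv.eq_add_integral a t]
      ring
    have e2 : (∫ t in a..b, (g t * v a + g t * (∫ τ in a..t, h τ)
            + (u a * h t + (∫ τ in a..t, g τ) * h t)))
        = (∫ t in a..b, g t) * v a + (∫ t in a..b, g t * ∫ τ in a..t, h τ)
          + (u a * (∫ t in a..b, h t) + ∫ t in a..b, (∫ τ in a..t, g τ) * h t) := by
      rw [intervalIntegral.integral_add ((i_g.mul_const _).add i_gH)
          ((i_h.const_mul _).add i_Gh),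
        intervalIntegral.integral_add (i_g.mul_const _) i_gH,
        intervalIntegral.integral_add (i_h.const_mul _) i_Gh,
        intervalIntegral.integral_mul_const, intervalIntegral.integral_const_mul]
    have e3 : (∫ t in a..b, g t * ∫ τ in a..t, h τ)
        = (∫ t in a..b, g t) * (∫ t in a..b, h t)
          - ∫ t in a..b, (∫ τ in a..t, g τ) * h t := by
      rw [fubini_swap hu.1 hv.1 hab]
      have hcg : ∀ τ ∈ Set.uIcc a b, (fun τ => (∫ t in τ..b, g t) * h τ) τ
          = (fun τ => (∫ t in a..b, g t) * h τ - (∫ t in a..τ, g t) * h τ) τ := by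
        intro τ _
        simp only
        rw [← intervalIntegral.integral_interval_sub_left (hu.intervalIntegrable a b)
          (hu.intervalIntegrable a τ)]
        ring
      rw [intervalIntegral.integral_congr hcg,
        intervalIntegral.integral_sub (i_h.const_mul _) i_Gh,
        intervalIntegral.integral_const_mul]
    rw [e1, e2, e3, hu.eq_add_integral a b, hv.eq_add_integral a b]
    ring
  intro x
  rcases le_total 0 x with hx | hx
  · have hk := key 0 x hx
    linear_combination hk
  · have hk := key x 0 hx
    have hsym : (∫ t in (0:ℝ)..x, (g t * v t + u t * h t))
        = -∫ t in x..(0:ℝ), (g t * v t + u t * h t) := intervalIntegral.integral_symm x 0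
    rw [hsym]
    linear_combination -hk

lemma memℒp_conj' {f : ℝ → ℂ} (hf : MemLp f 2 volume) :
    MemLp (fun x => (starRingEnd ℂ) (f x)) 2 volume := by
  refine ⟨continuous_star.comp_aestronglyMeasurable hf.1, ?_⟩
  have e : eLpNorm (fun x => (starRingEnd ℂ) (f x)) 2 volume = eLpNorm f 2 volume := by
    calc eLpNorm (fun x => (starRingEnd ℂ) (f x)) 2 volume
        = eLpNorm (fun x => ‖(starRingEnd ℂ) (f x)‖) 2 volume := (eLpNorm_norm _).symm
      _ = eLpNorm (fun x => ‖f x‖) 2 volume := by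
          simp only [RCLike.norm_conj]
      _ = eLpNorm f 2 volume := eLpNorm_norm f
  rw [e]
  exact hf.2

lemma integrable_mul_of_memℒp {f g : ℝ → ℂ} (hf : MemLp f 2 volume)
    (hg : MemLp g 2 volume) : Integrable (fun x => f x * g x) volume := by
  have h := MemLp.smul (p := 2) (q := 2) (r := 1) hg hf
  exact memLp_one_iff_integrable.mp h

end BrktAux

/-- For arbitrary `u, v ∈ Dom(L)` the limits `[u,v](−∞)` and `[u,v](∞)`
exist and are finite. -/
theorem brkt_limits_exist (p Q s r : ℝ → ℝ) (hc : Coeffs p Q s r)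
    (u u' w v v' wv : ℝ → ℂ)
    (hqu : QDom p Q s r u u' w) (hu2 : MemLp u 2 volume)
    (hlu : MemLp (lExpr p Q s r u u' w) 2 volume)
    (hqv : QDom p Q s r v v' wv) (hv2 : MemLp v 2 volume)
    (hlv : MemLp (lExpr p Q s r v v' wv) 2 volume) :
    (∃ c : ℂ, Tendsto (brkt p Q r u u' v v') atTop (nhds c)) ∧
    (∃ c : ℂ, Tendsto (brkt p Q r u u' v v') atBot (nhds c)) := by
  obtain ⟨hu1, huq⟩ := hqu
  obtain ⟨hv1, hvq⟩ := hqv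
  -- the derivative of the bracket given by the product rule
  have P1 := hu1.mul' hvq.conj'
  have P2 := huq.mul' hv1.conj'
  have PB : HasLocDeriv (brkt p Q r u u' v v')
      (fun x => (u' x * (starRingEnd ℂ) (qd1 p Q r v v' x)
          + u x * (starRingEnd ℂ) (wv x))
        - (w x * (starRingEnd ℂ) (v x)
          + qd1 p Q r u u' x * (starRingEnd ℂ) (v' x))) :=
    (P1.sub' P2).congr_fun fun x => rfl
  set F : ℝ → ℂ := fun t => lExpr p Q s r u u' w t * (starRingEnd ℂ) (v t)
      - u t * (starRingEnd ℂ) (lExpr p Q s r v v' wv t) with hFdef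
  -- a.e. identification of the derivative with the Green integrand
  have hae : ∀ᵐ x ∂(volume : Measure ℝ),
      (u' x * (starRingEnd ℂ) (qd1 p Q r v v' x) + u x * (starRingEnd ℂ) (wv x))
        - (w x * (starRingEnd ℂ) (v x) + qd1 p Q r u u' x * (starRingEnd ℂ) (v' x))
      = F x := by
    filter_upwards [hc.hp0] with x hx
    have hpx : (p x : ℂ) ≠ 0 := by exact_mod_cast hx
    simp only [hFdef, lExpr, qd1, map_sub, map_add, map_mul, map_neg, map_div₀,
      Complex.conj_ofReal, Complex.conj_I]
    field_simp
    ring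
  -- integrability of the Green integrand
  have hFint : Integrable F volume :=
    (integrable_mul_of_memℒp hlu (memℒp_conj' hv2)).sub
      (integrable_mul_of_memℒp hu2 (memℒp_conj' hlv))
  -- integral representation of the bracket
  have hrep : ∀ x : ℝ, brkt p Q r u u' v v' x
      = brkt p Q r u u' v v' 0 + ∫ t in (0:ℝ)..x, F t := by
    intro x
    rw [PB.2 x]
    congr 1
    apply intervalIntegral.integral_congr_ae
    filter_upwards [hae] with t ht _
    exact ht
  constructor
  · refine ⟨brkt p Q r u u' v v' 0 + ∫ t in Ioi (0:ℝ), F t, ?_⟩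
    have h1 : Tendsto (fun x : ℝ => ∫ t in (0:ℝ)..x, F t) atTop
        (nhds (∫ t in Ioi (0:ℝ), F t)) :=
      intervalIntegral_tendsto_integral_Ioi 0 hFint.integrableOn tendsto_id
    exact (tendsto_const_nhds.add h1).congr fun x => (hrep x).symm
  · refine ⟨brkt p Q r u u' v v' 0 - ∫ t in Iic (0:ℝ), F t, ?_⟩
    have h1 : Tendsto (fun x : ℝ => ∫ t in x..(0:ℝ), F t) atBot
        (nhds (∫ t in Iic (0:ℝ), F t)) :=
      intervalIntegral_tendsto_integral_Iic 0 hFint.integrableOn tendsto_id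
    refine (tendsto_const_nhds.sub h1).congr fun x => ?_
    rw [hrep x, intervalIntegral.integral_symm x 0]
    ring


end
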